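/- arXiv:2104.07898 — 2 statements merged into one kernel-verified Lean document; each statement's English description precedes it below -/
import Mathlib

section
/- Let T be an arborescence rooted at s, (S, V\S) a cut with s ∈ S that 1-respects T, and suppose a set W of vertices, all belonging to S, is removed from T, splitting T into a collection of subtrees. Then V\S is entirely contained in one of the resulting subtrees (connected components of T minus W). -/
/-- Connectivity in the tree `T` (undirected edges `{parent v, v}`) after the
vertex set `W` has been removed: both endpoints of every step avoid `W`. -/
def ConnAvoiding {V : Type*} (parent : V → V) (W : Set V) : V → V → Prop :=
  Relation.ReflTransGen (fun a b => (parent a = b ∨ parent b = a) ∧ a ∉ W ∧ b ∉ W)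

/-- Let `T` be an arborescence rooted at `s` (given by `parent`),
`(S, V\S)` a cut with `s ∈ S` that 1-respects `T`, and let `W ⊆ S` be a set of
removed vertices. Then `V\S` is entirely contained in one connected component
of the forest `T − W`: any two vertices outside `S` are connected in `T − W`. -/
theorem complement_in_one_component
    {V : Type*} [Fintype V] (parent : V → V) (s : V)
    (harb : ∀ v : V, ∃ k : ℕ, parent^[k] v = s)
    (S : Set V) (hs : s ∈ S)
    (hone : ∃! v : V, v ≠ s ∧ parent v ∈ S ∧ v ∉ S)
    (W : Set V) (hW : W ⊆ S) :
    ∀ x y : V, x ∉ S → y ∉ S → ConnAvoiding parent W x y := by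
  obtain ⟨v, hv, huniq⟩ := hone
  have key : ∀ k : ℕ, ∀ x : V, parent^[k] x = s → x ∉ S → ConnAvoiding parent W x v := by
    intro k
    induction k with
    | zero =>
      intro x hx hxS
      simp at hx
      exact absurd (hx ▸ hs) hxS
    | succ n ih =>
      intro x hx hxS
      rw [Function.iterate_succ_apply] at hx
      by_cases hp : parent x ∈ S
      · have hxv : x = v := huniq x ⟨fun h => hxS (h ▸ hs), hp, hxS⟩
        exact hxv ▸ Relation.ReflTransGen.refl
      · have step : (parent x = parent x ∨ parent (parent x) = x) ∧ x ∉ W ∧ parent x ∉ W :=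
          ⟨Or.inl rfl, fun h => hxS (hW h), fun h => hp (hW h)⟩
        exact Relation.ReflTransGen.head step (ih (parent x) hx hp)
  have symm : Symmetric fun a b : V => (parent a = b ∨ parent b = a) ∧ a ∉ W ∧ b ∉ W := by
    intro a b ⟨h1, h2, h3⟩
    exact ⟨h1.symm, h3, h2⟩
  intro x y hx hy
  obtain ⟨kx, hkx⟩ := harb x
  obtain ⟨ky, hky⟩ := harb y
  exact (key kx x hkx hx).trans ((@Relation.ReflTransGen.symmetric _ _ ⟨fun a b h => symm h⟩).symm _ _ (key ky y hky hy))
end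

section
/- Let x be a probability distribution over arborescences A_1,…,A_N rooted at s (x ≥ 0, ∑x_i = 1), with max load γ = max_j ∑_i x_i·1[j ∈ A_i]/w(j) over edges j. If S is a cut with s on the source side of weight δ(S), then the expected number of edges of a random arborescence (drawn with probabilities x_i) crossing the cut (S, V\S) is at most γ·δ(S), and is always at least 1. -/
open Finset

/-- Let `x` be a probability distribution over the
`s`-arborescences `A_1,…,A_N` of a weighted digraph `G = (V, E, w)` with
positive weights, with maximum load `γ = max_j ∑_i x_i·1[j ∈ A_i]/w(j)` over
edges `j ∈ E`.  If `S` is a cut with `s` on the source side and weight `δ(S)`,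
then the expected number of edges of a random arborescence (drawn with
probabilities `x_i`) crossing the cut `(S, V\S)` is at most `γ·δ(S)`, and is
always at least `1` (since every `s`-arborescence crosses the cut). -/
theorem expected_crossings_of_random_arborescence
    {V : Type*} [Fintype V] [DecidableEq V]
    (E : Finset (V × V)) (w : V × V → ℝ) (hw : ∀ e ∈ E, 0 < w e)
    (s : V) (N : ℕ) (A : Fin N → Finset (V × V))
    (hAE : ∀ i : Fin N, A i ⊆ E)
    (harb : ∀ i : Fin N, ∃ parent : V → V,
      (∀ v : V, v ≠ s → (parent v, v) ∈ A i) ∧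
      (∀ v : V, ∃ k : ℕ, parent^[k] v = s))
    (x : Fin N → ℝ) (hx : ∀ i, 0 ≤ x i) (hx1 : ∑ i : Fin N, x i = 1)
    (γ : ℝ)
    (hload : ∀ e ∈ E, (∑ i : Fin N, x i * (if e ∈ A i then 1 else 0)) / w e ≤ γ)
    (S : Finset V) (hsS : s ∈ S) (hS : S ≠ Finset.univ) :
    (1 : ℝ) ≤ ∑ i : Fin N,
        x i * (((A i).filter (fun e => e.1 ∈ S ∧ e.2 ∉ S)).card : ℝ)
    ∧ ∑ i : Fin N,
        x i * (((A i).filter (fun e => e.1 ∈ S ∧ e.2 ∉ S)).card : ℝ)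
      ≤ γ * ∑ e ∈ E.filter (fun e => e.1 ∈ S ∧ e.2 ∉ S), w e := by
  constructor
  · -- each arborescence crosses the cut
    have hcross : ∀ i : Fin N,
        1 ≤ (((A i).filter (fun e => e.1 ∈ S ∧ e.2 ∉ S)).card : ℝ) := by
      intro i
      obtain ⟨parent, hpar, hroot⟩ := harb i
      -- find v₀ ∉ S
      obtain ⟨v₀, hv₀⟩ : ∃ v, v ∉ S := by
        by_contra h
        push_neg at h
        exact hS (Finset.eq_univ_iff_forall.mpr h)
      have hex : ∃ k, parent^[k] v₀ ∈ S := by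
        obtain ⟨k, hk⟩ := hroot v₀
        exact ⟨k, by rw [hk]; exact hsS⟩
      classical
      let m := Nat.find hex
      have hmS : parent^[m] v₀ ∈ S := Nat.find_spec hex
      have hm0 : m ≠ 0 := by
        intro h
        have := hmS
        rw [h] at this
        simp at this
        exact hv₀ this
      obtain ⟨n, hn⟩ := Nat.exists_eq_succ_of_ne_zero hm0
      have hnS : parent^[n] v₀ ∉ S := Nat.find_min hex (by omega)
      set u := parent^[n] v₀ with hu
      have hus : u ≠ s := fun h => hnS (h ▸ hsS)
      have hedge : (parent u, u) ∈ A i := hpar u hus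
      have hpu : parent u ∈ S := by
        have : parent^[m] v₀ = parent u := by
          rw [hn, Function.iterate_succ_apply']
        rwa [this] at hmS
      have : ((A i).filter (fun e => e.1 ∈ S ∧ e.2 ∉ S)).Nonempty :=
        ⟨(parent u, u), Finset.mem_filter.mpr ⟨hedge, hpu, hnS⟩⟩
      exact_mod_cast Finset.one_le_card.mpr this
    calc (1 : ℝ) = ∑ i : Fin N, x i * 1 := by simp [hx1]
      _ ≤ _ := Finset.sum_le_sum fun i _ =>
          mul_le_mul_of_nonneg_left (hcross i) (hx i)
  · classical
    have hcard : ∀ i : Fin N,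
        (((A i).filter (fun e => e.1 ∈ S ∧ e.2 ∉ S)).card : ℝ)
          = ∑ e ∈ E.filter (fun e => e.1 ∈ S ∧ e.2 ∉ S),
              (if e ∈ A i then (1 : ℝ) else 0) := by
      intro i
      rw [Finset.sum_boole]
      congr 1
      apply congrArg
      ext e
      simp only [Finset.mem_filter]
      constructor
      · rintro ⟨hA, h1, h2⟩; exact ⟨⟨hAE i hA, h1, h2⟩, hA⟩
      · rintro ⟨⟨_, h1, h2⟩, hA⟩; exact ⟨hA, h1, h2⟩
    calc ∑ i : Fin N, x i * (((A i).filter (fun e => e.1 ∈ S ∧ e.2 ∉ S)).card : ℝ)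
        = ∑ e ∈ E.filter (fun e => e.1 ∈ S ∧ e.2 ∉ S),
            ∑ i : Fin N, x i * (if e ∈ A i then (1 : ℝ) else 0) := by
          simp_rw [hcard, Finset.mul_sum]
          rw [Finset.sum_comm]
      _ ≤ ∑ e ∈ E.filter (fun e => e.1 ∈ S ∧ e.2 ∉ S), γ * w e := by
          apply Finset.sum_le_sum
          intro e he
          have heE : e ∈ E := (Finset.mem_filter.mp he).1
          have hwe := hw e heE
          have := hload e heE
          rw [div_le_iff₀ hwe] at this
          linarith
      _ = γ * ∑ e ∈ E.filter (fun e => e.1 ∈ S ∧ e.2 ∉ S), w e := by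
          rw [Finset.mul_sum]
end
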